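/- arXiv:1704.05292 — 3 statements merged into one kernel-verified Lean document; each statement's English description precedes it below -/
import Mathlib

section
/- For all real α > −1/2, x_d > 0, y_d > 0, the kernel W_α satisfies the normalization identity ∫_0^∞ W_α(x_d, y_d, ρ) ρ^{2α+1} dρ = 1. -/
open MeasureTheory Real Set
open scoped ENNReal RealInnerProductSpace

noncomputable section

/-- The upper half space `ℝ^{d-1} × (0,∞)` sits inside `Pt d`, the set of pairs
`(x', x_d)` with `x' ∈ ℝ^{d-1}` (Euclidean) and `x_d ∈ ℝ`. -/
abbrev Pt (d : ℕ) : Type := EuclideanSpace ℝ (Fin (d - 1)) × ℝ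

/-- Euclidean norm on `Pt d`. -/
def euclNorm {d : ℕ} (p : Pt d) : ℝ := Real.sqrt (‖p.1‖ ^ 2 + p.2 ^ 2)

/-- The measure `ν_α` on the half space: `dν_α(x) = x_d^{2α+1}/((2π)^{(d-1)/2} 2^α Γ(α+1)) dx`,
supported on `{x_d > 0}`. -/
def nu (α : ℝ) (d : ℕ) : Measure (Pt d) :=
  (((volume : Measure (EuclideanSpace ℝ (Fin (d - 1)))).prod
      ((volume : Measure ℝ).withDensity fun t =>
        ENNReal.ofReal (t ^ (2 * α + 1) /
          ((2 * π) ^ ((d - 1 : ℝ) / 2) * 2 ^ α * Real.Gamma (α + 1))))).restrict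
    {p : Pt d | 0 < p.2})

/-- The half ball `B^+(x,ε)`: intersection of the closed Euclidean ball of radius `ε`
centered at `x` with `ℝ^{d-1} × [0,∞)`. -/
def Bplus {d : ℕ} (x : Pt d) (ε : ℝ) : Set (Pt d) :=
  {p : Pt d | euclNorm (p - x) ≤ ε ∧ 0 ≤ p.2}

/-- The box `C^+(x,ε) = B_{d-1}(x',ε) × (max{0, x_d-ε}, x_d+ε)`. -/
def Cplus {d : ℕ} (x : Pt d) (ε : ℝ) : Set (Pt d) :=
  {p : Pt d | ‖p.1 - x.1‖ ≤ ε ∧ p.2 ∈ Set.Ioo (max 0 (x.2 - ε)) (x.2 + ε)}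

/-- The Weinstein kernel `W_α(x_d, y_d, ρ)`. -/
def Wker (α xd yd ρ : ℝ) : ℝ :=
  if |xd - yd| < ρ ∧ ρ < xd + yd then
    Real.Gamma (α + 1) * ((xd + yd) ^ 2 - ρ ^ 2) ^ (α - 1 / 2) *
      (ρ ^ 2 - (xd - yd) ^ 2) ^ (α - 1 / 2) /
      (2 ^ (2 * α - 1) * Real.sqrt π * Real.Gamma (α + 1 / 2) * (xd * yd * ρ) ^ (2 * α))
  else 0

/-- The Weinstein translate `τ_x(χ_{B^+(0,ε)})(-y', y_d)
  = ∫_0^∞ χ_{B^+(0,ε)}(x'-y', ρ) W_α(x_d, y_d, ρ) ρ^{2α+1} dρ`. -/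
def tauChi (α : ℝ) {d : ℕ} (ε : ℝ) (x y : Pt d) : ℝ :=
  ∫ ρ in Set.Ioi (0 : ℝ),
    (Bplus (0 : Pt d) ε).indicator (fun _ => (1 : ℝ)) (x.1 - y.1, ρ) *
      Wker α x.2 y.2 ρ * ρ ^ (2 * α + 1)

/-- The normalized Bessel function `j_γ` of order `γ > -1/2`, via Poisson's integral
representation. -/
def besselj (γ z : ℝ) : ℝ :=
  Real.Gamma (γ + 1) / (Real.sqrt π * Real.Gamma (γ + 1 / 2)) *
    ∫ t in Set.Icc (-1 : ℝ) 1, (1 - t ^ 2) ^ (γ - 1 / 2) * Real.cos (z * t)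

/-- The Weinstein transform of the characteristic function of `B^+(0,ε)`:
`F_W(χ_{B^+(0,ε)})(λ) = ∫_{B^+(0,ε)} e^{-i⟨y',λ'⟩} j_α(y_d λ_d) dν_α(y)`. -/
def FWchi (α : ℝ) (d : ℕ) (ε : ℝ) (lam : Pt d) : ℂ :=
  ∫ y in Bplus (0 : Pt d) ε,
    Complex.exp (-(Complex.I * ((inner ℝ y.1 lam.1 : ℝ) : ℂ))) *
      ((besselj α (y.2 * lam.2) : ℝ) : ℂ) ∂(nu α d)

/-- The uncentered maximal function `M_α f`. -/
def Mmax (α : ℝ) (d : ℕ) (f : Pt d → ℝ) (x : Pt d) : ℝ≥0∞ :=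
  ⨆ (ε : ℝ) (_ : 0 < ε) (z : Pt d) (_ : z ∈ Bplus x ε),
    ENNReal.ofReal |∫ y, f y * tauChi α ε z y ∂(nu α d)| / nu α d (Bplus (0 : Pt d) ε)

/-- The auxiliary uncentered maximal function `M̃_α f`. -/
def Mtilde (α : ℝ) (d : ℕ) (f : Pt d → ℝ) (x : Pt d) : ℝ≥0∞ :=
  ⨆ (ε : ℝ) (_ : 0 < ε) (z : Pt d) (_ : z ∈ Bplus x ε),
    (∫⁻ y in Bplus z ε, ENNReal.ofReal |f y| ∂(nu α d)) / nu α d (Bplus z ε)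

lemma real_beta_eq (p : ℝ) (hp : 0 < p) :
    ∫ s in Set.Ioo (0:ℝ) 1, s ^ (p - 1) * (1 - s) ^ (p - 1) =
      Real.Gamma p * Real.Gamma p / Real.Gamma (2 * p) := by
  have h := Complex.Gamma_mul_Gamma_eq_betaIntegral (s := (p:ℂ)) (t := (p:ℂ))
    (by simpa using hp) (by simpa using hp)
  have hb : Complex.betaIntegral p p =
      ((∫ s in Set.Ioo (0:ℝ) 1, s ^ (p-1) * (1-s) ^ (p-1) : ℝ) : ℂ) := by
    rw [Complex.betaIntegral]
    have hcongr : ∀ x ∈ Set.uIcc (0:ℝ) 1,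
        (x:ℂ) ^ ((p:ℂ)-1) * (1-(x:ℂ)) ^ ((p:ℂ)-1)
          = (((x ^ (p-1) * (1-x) ^ (p-1) : ℝ)) : ℂ) := by
      intro x hx
      rw [Set.uIcc_of_le zero_le_one] at hx
      push_cast
      rw [Complex.ofReal_cpow hx.1, Complex.ofReal_cpow (by linarith [hx.2] : (0:ℝ) ≤ 1 - x)]
      push_cast
      ring
    rw [intervalIntegral.integral_congr hcongr, intervalIntegral.integral_ofReal,
      intervalIntegral.integral_of_le zero_le_one, MeasureTheory.integral_Ioc_eq_integral_Ioo]
  rw [hb, (by push_cast; ring : ((p:ℂ)+(p:ℂ)) = ((2*p:ℝ):ℂ)), Complex.Gamma_ofReal,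
    Complex.Gamma_ofReal, ← Complex.ofReal_mul, ← Complex.ofReal_mul] at h
  have h' := Complex.ofReal_injective h
  have hΓ : Real.Gamma (2*p) ≠ 0 := (Real.Gamma_pos_of_pos (by linarith)).ne'
  field_simp
  rw [← show Real.Gamma (2*p) = Real.Gamma (p*2) by rw [mul_comm]]
  linarith [h']

lemma alg_aux (cc r A X Y R P T S G1 G2 T2 : ℝ) (hr : r ≠ 0) (hR : R ≠ 0)
    (hP : P ≠ 0) (hT : T ≠ 0) (hS : S ≠ 0) (hG2 : G2 ≠ 0)
    (hkey : A * A * cc = T2 * T * 2 * P) :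
    cc * (1 / (2 * r)) * (G1 * (A * Y) * (A * X) / (T * S * G2 * (P * R)) * (R * r))
      = G1 * T2 / (S * G2) * (X * Y) := by
  field_simp
  linear_combination (G1 * X * Y) * hkey

lemma alg_aux2 (Γh Γ1 Γ2 S E F : ℝ) (hS : S ≠ 0) (hΓh : Γh ≠ 0) (hΓ2 : Γ2 ≠ 0)
    (hdup : Γh * Γ1 = Γ2 * F * S) (h2 : E * F = 1) :
    Γ1 * E / (S * Γh) * (Γh * Γh / Γ2) = 1 := by
  field_simp
  linear_combination E * hdup + (Γ2 * S) * h2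

/-- For all real `α > -1/2`, `x_d > 0`, `y_d > 0`, the kernel `W_α` satisfies
`∫_0^∞ W_α(x_d, y_d, ρ) ρ^{2α+1} dρ = 1`. -/
theorem weinstein_kernel_normalization (α : ℝ) (hα : -(1/2 : ℝ) < α)
    (xd yd : ℝ) (hxd : 0 < xd) (hyd : 0 < yd) :
    ∫ ρ in Set.Ioi (0 : ℝ), Wker α xd yd ρ * ρ ^ (2 * α + 1) = 1 := by
  set a2 : ℝ := (xd - yd) ^ 2 with ha2
  set c : ℝ := 4 * (xd * yd) with hc
  have hcpos : 0 < c := by positivity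
  have hab : a2 + c = (xd + yd) ^ 2 := by rw [ha2, hc]; ring
  set g : ℝ → ℝ := fun s => Real.sqrt (a2 + c * s) with hg
  have ha2nn : 0 ≤ a2 := sq_nonneg _
  -- positivity of inner function on Ioo 0 1
  have hin : ∀ s ∈ Set.Ioo (0:ℝ) 1, 0 < a2 + c * s := fun s hs => by nlinarith [hs.1]
  -- derivative
  have hderiv : ∀ s ∈ Set.Ioo (0:ℝ) 1,
      HasDerivWithinAt g (c * (1 / (2 * Real.sqrt (a2 + c * s)))) (Set.Ioo 0 1) s := by
    intro s hs
    have h1 : HasDerivAt (fun s : ℝ => a2 + c * s) c s := by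
      simpa using ((hasDerivAt_id s).const_mul c).const_add a2
    have h2 := (Real.hasDerivAt_sqrt (hin s hs).ne').comp s h1
    simpa [hg, mul_comm, Function.comp_def] using h2.hasDerivWithinAt
  -- injectivity
  have hmono : StrictMonoOn g (Set.Ioo 0 1) := by
    intro s hs t ht hst
    exact Real.sqrt_lt_sqrt (by nlinarith [hs.1]) (by nlinarith)
  -- image
  have himg : g '' Set.Ioo 0 1 = Set.Ioo (|xd - yd|) (xd + yd) := by
    ext ρ
    constructor
    · rintro ⟨s, hs, rfl⟩
      constructor
      · calc |xd - yd| = Real.sqrt a2 := (Real.sqrt_sq_eq_abs _).symm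
          _ < g s := Real.sqrt_lt_sqrt ha2nn (by nlinarith [hs.1])
      · calc g s < Real.sqrt (a2 + c) := Real.sqrt_lt_sqrt (hin s hs).le (by nlinarith [hs.2])
          _ = xd + yd := by rw [hab, Real.sqrt_sq (by positivity)]
    · rintro ⟨h1, h2⟩
      have hρpos : 0 < ρ := lt_of_le_of_lt (abs_nonneg _) h1
      have hρ2 : a2 < ρ ^ 2 := by
        calc a2 = |xd - yd| ^ 2 := by rw [sq_abs]
          _ < ρ ^ 2 := by apply pow_lt_pow_left₀ h1 (abs_nonneg _); norm_num
      have hρ2' : ρ ^ 2 < a2 + c := by rw [hab]; exact pow_lt_pow_left₀ h2 hρpos.le (by norm_num)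
      refine ⟨(ρ ^ 2 - a2) / c, ⟨div_pos (by linarith) hcpos, by rw [div_lt_one hcpos]; linarith⟩, ?_⟩
      show Real.sqrt (a2 + c * ((ρ ^ 2 - a2) / c)) = ρ
      rw [mul_div_cancel₀ _ hcpos.ne']
      rw [(by ring : a2 + (ρ ^ 2 - a2) = ρ ^ 2), Real.sqrt_sq hρpos.le]
  -- Step 1: reduce to Ioo
  have hker : (fun ρ => Wker α xd yd ρ * ρ ^ (2 * α + 1)) =
      (Set.Ioo (|xd - yd|) (xd + yd)).indicator
        (fun ρ => Wker α xd yd ρ * ρ ^ (2 * α + 1)) := by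
    funext ρ
    by_cases h : ρ ∈ Set.Ioo (|xd - yd|) (xd + yd)
    · rw [Set.indicator_of_mem h]
    · rw [Set.indicator_of_notMem h, Wker, if_neg (by simpa [Set.mem_Ioo] using h), zero_mul]
  have hsub : Set.Ioo (|xd - yd|) (xd + yd) ⊆ Set.Ioi (0:ℝ) :=
    fun ρ hρ => lt_of_le_of_lt (abs_nonneg _) hρ.1
  rw [hker, MeasureTheory.setIntegral_indicator measurableSet_Ioo,
    Set.inter_eq_self_of_subset_right hsub,
    ← himg,
    MeasureTheory.integral_image_eq_integral_abs_deriv_smul measurableSet_Ioo hderiv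
      hmono.injOn]
  -- Step 2: pointwise rewrite
  set K : ℝ := Real.Gamma (α + 1) * 2 ^ (2 * α) / (Real.sqrt π * Real.Gamma (α + 1/2)) with hK
  have hpt : ∀ s ∈ Set.Ioo (0:ℝ) 1,
      |c * (1 / (2 * Real.sqrt (a2 + c * s)))| • (Wker α xd yd (g s) * g s ^ (2 * α + 1))
        = K * (s ^ (α + 1/2 - 1) * (1 - s) ^ (α + 1/2 - 1)) := by
    intro s hs
    have hin' := hin s hs
    have hρpos : 0 < g s := Real.sqrt_pos.mpr hin'
    have hρ2 : g s ^ 2 = a2 + c * s := Real.sq_sqrt hin'.le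
    have hcond : |xd - yd| < g s ∧ g s < xd + yd := by
      rw [← Set.mem_Ioo, ← himg]; exact ⟨s, hs, rfl⟩
    have hd1 : (xd + yd) ^ 2 - g s ^ 2 = c * (1 - s) := by rw [hρ2, ← hab]; ring
    have hd2 : g s ^ 2 - (xd - yd) ^ 2 = c * s := by rw [hρ2, ← ha2]; ring
    rw [smul_eq_mul, Wker, if_pos hcond, hd1, hd2,
      abs_of_pos (by positivity),
      Real.mul_rpow hcpos.le (by linarith [hs.2] : (0:ℝ) ≤ 1 - s),
      Real.mul_rpow hcpos.le hs.1.le,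
      Real.mul_rpow (by positivity : (0:ℝ) ≤ xd * yd) hρpos.le,
      Real.rpow_add hρpos, Real.rpow_one]
    have hkey : c ^ (α - 1/2) * c ^ (α - 1/2) * c
        = 2 ^ (2*α) * 2 ^ (2*α - 1) * 2 * (xd * yd) ^ (2*α) := by
      have h4 : c ^ (α - 1/2) * c ^ (α - 1/2) * c = c ^ (2 * α) := by
        calc c ^ (α - 1/2) * c ^ (α - 1/2) * c = c ^ ((α - 1/2) + (α - 1/2) + 1) := by
              rw [Real.rpow_add hcpos, Real.rpow_add hcpos, Real.rpow_one]
          _ = c ^ (2 * α) := by congr 1; ring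
      have h44 : (4:ℝ) ^ (2*α) = 2 ^ (2*α) * 2 ^ (2*α) := by
        rw [← Real.mul_rpow (by norm_num) (by norm_num)]; norm_num
      have h22 : (2:ℝ) ^ (2*α) = 2 ^ (2*α-1) * 2 := by
        rw [show (2*α) = (2*α-1)+1 by ring, Real.rpow_add two_pos, Real.rpow_one]
        norm_num
      rw [h4, hc, Real.mul_rpow (by norm_num) (by positivity), h44]
      nth_rewrite 2 [h22]
      ring
    have hxy : (0:ℝ) < (xd * yd) ^ (2*α) := Real.rpow_pos_of_pos (by positivity) _
    have hρr : (0:ℝ) < (g s) ^ (2*α) := Real.rpow_pos_of_pos hρpos _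
    have h2r : (0:ℝ) < (2:ℝ) ^ (2*α-1) := Real.rpow_pos_of_pos two_pos _
    have hsπ : (0:ℝ) < Real.sqrt π := Real.sqrt_pos.mpr Real.pi_pos
    have hΓh : (0:ℝ) < Real.Gamma (α + 1/2) := Real.Gamma_pos_of_pos (by linarith)
    rw [show α + 1/2 - 1 = α - 1/2 by ring, hK,
      (rfl : Real.sqrt (a2 + c * s) = g s)]
    exact alg_aux c (g s) (c ^ (α - 1/2)) (s ^ (α - 1/2)) ((1-s) ^ (α - 1/2))
      ((g s) ^ (2*α)) ((xd*yd) ^ (2*α)) ((2:ℝ) ^ (2*α - 1)) (Real.sqrt π)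
      (Real.Gamma (α+1)) (Real.Gamma (α+1/2)) ((2:ℝ) ^ (2*α))
      hρpos.ne' hρr.ne' hxy.ne' h2r.ne' hsπ.ne' hΓh.ne' hkey
  rw [MeasureTheory.setIntegral_congr_fun measurableSet_Ioo hpt,
    MeasureTheory.integral_const_mul, real_beta_eq (α + 1/2) (by linarith)]
  -- Step 3: Gamma gymnastics
  have hdup := Real.Gamma_mul_Gamma_add_half (α + 1/2)
  rw [(by ring : (α + 1/2) + 1/2 = α + 1), (by ring : 2 * (α + 1/2) = 2 * α + 1),
    (by ring : (1:ℝ) - (2 * α + 1) = -(2*α))] at hdup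
  have hΓ1 : Real.Gamma (α + 1/2) ≠ 0 := (Real.Gamma_pos_of_pos (by linarith)).ne'
  have hΓ2 : Real.Gamma (2 * α + 1) ≠ 0 := (Real.Gamma_pos_of_pos (by linarith)).ne'
  have hsπ : Real.sqrt π ≠ 0 := by positivity
  have h2 : (2:ℝ) ^ (2*α) * 2 ^ (-(2*α)) = 1 := by
    rw [← Real.rpow_add two_pos]; norm_num
  rw [hK, (by ring : 2 * (α + 1/2) = 2 * α + 1)]
  exact alg_aux2 (Real.Gamma (α+1/2)) (Real.Gamma (α+1)) (Real.Gamma (2*α+1))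
    (Real.sqrt π) ((2:ℝ) ^ (2*α)) ((2:ℝ) ^ (-(2*α))) hsπ hΓ1 hΓ2 hdup h2


end
end

section
/- Assume α > d/2 − 1. There exists a constant c > 0, depending only on α and d, such that for every x ∈ ℝ^d_+ with x_d > 0, every ε > 0, and every y ∈ ℝ^d_+, one has 0 ≤ τ_x(χ_{B^+(0,ε)})(−y', y_d) ≤ c (ε / x_d)^{2α+1}. -/
open MeasureTheory Real Set
open scoped ENNReal RealInnerProductSpace

noncomputable section

private lemma aux_rpow_bound {p L u : ℝ} (hL : 0 < L) (h1 : L / 2 ≤ u) (h2 : u ≤ 2 * L) :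
    u ^ p ≤ (max 1 (2 ^ p) * max 1 (2 ^ (-p))) * L ^ p := by
  have hu : 0 < u := lt_of_lt_of_le (by linarith) h1
  have hLp : 0 < L ^ p := Real.rpow_pos_of_pos hL p
  have ha : (1:ℝ) ≤ max 1 ((2:ℝ) ^ p) := le_max_left _ _
  have hb : (1:ℝ) ≤ max 1 ((2:ℝ) ^ (-p)) := le_max_left _ _
  rcases le_or_gt 0 p with hp | hp
  · have h := Real.rpow_le_rpow hu.le h2 hp
    rw [Real.mul_rpow (by norm_num) hL.le] at h
    have h2p : (2:ℝ) ^ p ≤ max 1 ((2:ℝ) ^ p) := le_max_right _ _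
    calc u ^ p ≤ 2 ^ p * L ^ p := h
      _ ≤ max 1 (2 ^ p) * L ^ p := mul_le_mul_of_nonneg_right h2p hLp.le
      _ = max 1 (2 ^ p) * 1 * L ^ p := by ring
      _ ≤ max 1 (2 ^ p) * max 1 (2 ^ (-p)) * L ^ p :=
          mul_le_mul_of_nonneg_right (mul_le_mul_of_nonneg_left hb (by linarith)) hLp.le
  · have h := Real.rpow_le_rpow_of_nonpos (by linarith : (0:ℝ) < L / 2) h1 hp.le
    have e : (L / 2) ^ p = L ^ p * (2:ℝ) ^ (-p) := by
      rw [div_eq_mul_inv, Real.mul_rpow hL.le (by norm_num), Real.inv_rpow (by norm_num),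
        ← Real.rpow_neg (by norm_num)]
    have h2p : (2:ℝ) ^ (-p) ≤ max 1 ((2:ℝ) ^ (-p)) := le_max_right _ _
    rw [e] at h
    calc u ^ p ≤ L ^ p * 2 ^ (-p) := h
      _ = 1 * 2 ^ (-p) * L ^ p := by ring
      _ ≤ max 1 (2 ^ p) * max 1 (2 ^ (-p)) * L ^ p :=
          mul_le_mul_of_nonneg_right
            (mul_le_mul ha h2p (Real.rpow_nonneg (by norm_num) _) (le_trans one_pos.le ha))
            hLp.le

private lemma aux_integral_sub_rpow {p m c : ℝ} (hp : -1 < p) (h : m ≤ c) :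
    ∫ ρ in Set.Ioc m c, (ρ - m) ^ p = (c - m) ^ (p + 1) / (p + 1) := by
  rw [← intervalIntegral.integral_of_le h,
    intervalIntegral.integral_comp_sub_right (fun u => u ^ p) m,
    integral_rpow (Or.inl hp)]
  rw [sub_self, Real.zero_rpow (by linarith), sub_zero]

private lemma aux_integrableOn_sub_rpow {p : ℝ} (m c : ℝ) (hp : -1 < p) (h : m ≤ c) :
    IntegrableOn (fun ρ => (ρ - m) ^ p) (Set.Ioc m c) := by
  have h0 : IntervalIntegrable (fun u : ℝ => u ^ p) volume 0 (c - m) :=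
    intervalIntegral.intervalIntegrable_rpow' hp
  have h1 := h0.comp_sub_right m
  simp only [zero_add, sub_add_cancel] at h1
  exact (intervalIntegrable_iff_integrableOn_Ioc_of_le h).mp h1

private lemma aux_integrableOn_rsub_rpow {p : ℝ} (s w c : ℝ) (hp : -1 < p) (h : w ≤ c) :
    IntegrableOn (fun ρ => (s - ρ) ^ p) (Set.Ioc w c) := by
  have h0 : IntervalIntegrable (fun u : ℝ => u ^ p) volume (s - w) (s - c) :=
    intervalIntegral.intervalIntegrable_rpow' hp
  have h1 := h0.comp_sub_left s
  simp only [sub_sub_cancel] at h1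
  exact (intervalIntegrable_iff_integrableOn_Ioc_of_le h).mp h1

private lemma aux_integral_rsub_rpow {p s w c : ℝ} (hp : -1 < p) (hwc : w ≤ c) (hcs : c ≤ s) :
    ∫ ρ in Set.Ioc w c, (s - ρ) ^ p ≤ (s - w) ^ (p + 1) / (p + 1) := by
  rw [← intervalIntegral.integral_of_le hwc,
    intervalIntegral.integral_comp_sub_left (fun u => u ^ p) s,
    integral_rpow (Or.inl hp)]
  have h1 : (0:ℝ) ≤ (s - c) ^ (p+1) := Real.rpow_nonneg (by linarith) _
  have h2 : 0 < p + 1 := by linarith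
  exact (div_le_div_iff_of_pos_right h2).mpr (by linarith)

set_option maxHeartbeats 2000000 in
/-- Assume `α > d/2 - 1`. There is `c > 0` depending only on `α` and `d`
such that for every `x ∈ ℝ^d_+` with `x_d > 0`, every `ε > 0` and every `y ∈ ℝ^d_+`,
`0 ≤ τ_x(χ_{B^+(0,ε)})(-y', y_d) ≤ c (ε/x_d)^{2α+1}`. -/
theorem tauChi_pointwise_bound (α : ℝ) (d : ℕ) (hd : 2 ≤ d) (hα : (d : ℝ) / 2 - 1 < α) :
    ∃ c : ℝ, 0 < c ∧ ∀ x : Pt d, 0 < x.2 → ∀ ε : ℝ, 0 < ε → ∀ y : Pt d, 0 < y.2 →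
      0 ≤ tauChi α ε x y ∧ tauChi α ε x y ≤ c * (ε / x.2) ^ (2 * α + 1) := by
  have hd2 : (2:ℝ) ≤ (d:ℝ) := by exact_mod_cast hd
  have hα0 : 0 < α := by linarith
  have hp : (-1:ℝ) < α - 1/2 := by linarith
  have hp1 : (0:ℝ) < α - 1/2 + 1 := by linarith
  set K : ℝ := Real.Gamma (α + 1) / (2 ^ (2 * α - 1) * Real.sqrt π * Real.Gamma (α + 1 / 2))
    with hK_def
  have hK : 0 < K := by
    apply div_pos (Real.Gamma_pos_of_pos (by linarith))
    exact mul_pos (mul_pos (Real.rpow_pos_of_pos two_pos _) (Real.sqrt_pos.mpr Real.pi_pos))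
      (Real.Gamma_pos_of_pos (by linarith))
  set Q : ℝ := max 1 ((2:ℝ) ^ (α - 1/2)) * max 1 ((2:ℝ) ^ (-(α - 1/2))) with hQ_def
  have hQ1 : 1 ≤ Q := by
    calc (1:ℝ) = 1 * 1 := by ring
      _ ≤ Q := mul_le_mul (le_max_left _ _) (le_max_left _ _) one_pos.le
          (le_trans one_pos.le (le_max_left _ _))
  have hQ0 : 0 < Q := lt_of_lt_of_le one_pos hQ1
  set CC : ℝ := K * Q ^ 3 * (1 + 2 ^ (α - 1/2 + 1)) / (α - 1/2 + 1) with hCC_def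
  have hCC : 0 < CC := by
    apply div_pos _ hp1
    apply mul_pos (mul_pos hK (pow_pos hQ0 3))
    have : (0:ℝ) < 2 ^ (α - 1/2 + 1) := Real.rpow_pos_of_pos two_pos _
    linarith
  set cfin : ℝ := CC * (4 ^ (2 * α) * 2 ^ (2 * α + 1) + 4 ^ (α - 1/2) * 2 ^ (α + 1/2))
    with hcfin_def
  have hcfin : 0 < cfin := by
    apply mul_pos hCC
    have h1 : (0:ℝ) < 4 ^ (2 * α) * 2 ^ (2 * α + 1) :=
      mul_pos (Real.rpow_pos_of_pos (by norm_num) _) (Real.rpow_pos_of_pos two_pos _)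
    have h2 : (0:ℝ) < 4 ^ (α - 1/2) * 2 ^ (α + 1/2) :=
      mul_pos (Real.rpow_pos_of_pos (by norm_num) _) (Real.rpow_pos_of_pos two_pos _)
    linarith
  clear_value K Q CC cfin
  refine ⟨cfin, hcfin, ?_⟩
  intro x hx ε hε y hy
  set F : ℝ → ℝ := fun ρ =>
    (Bplus (0 : Pt d) ε).indicator (fun _ => (1 : ℝ)) (x.1 - y.1, ρ) *
      Wker α x.2 y.2 ρ * ρ ^ (2 * α + 1) with hF_def
  have htau : tauChi α ε x y = ∫ ρ in Set.Ioi (0:ℝ), F ρ := rfl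
  clear_value F
  -- getting ρ ≤ ε from membership in the half ball
  have hmem_rho : ∀ ρ : ℝ, 0 ≤ ρ → (x.1 - y.1, ρ) ∈ Bplus (0 : Pt d) ε → ρ ≤ ε := by
    intro ρ h0 hmem
    simp only [Bplus, Set.mem_setOf_eq, sub_zero] at hmem
    obtain ⟨h1, -⟩ := hmem
    simp only [euclNorm] at h1
    calc ρ = Real.sqrt (ρ ^ 2) := (Real.sqrt_sq h0).symm
      _ ≤ Real.sqrt (‖x.1 - y.1‖ ^ 2 + ρ ^ 2) :=
          Real.sqrt_le_sqrt (le_add_of_nonneg_left (sq_nonneg _))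
      _ ≤ ε := h1
  have hW_nonneg : ∀ ρ : ℝ, 0 ≤ Wker α x.2 y.2 ρ := by
    intro ρ
    simp only [Wker]
    split_ifs with hcond
    · obtain ⟨h1, h2⟩ := hcond
      have hρ : 0 < ρ := lt_of_le_of_lt (abs_nonneg _) h1
      have e1 : (0:ℝ) ≤ (x.2 + y.2) ^ 2 - ρ ^ 2 := by
        have h := mul_nonneg (sub_nonneg.mpr h2.le)
          (by linarith only [hρ, h2] : (0:ℝ) ≤ x.2 + y.2 + ρ)
        nlinarith only [h]
      have e2 : (0:ℝ) ≤ ρ ^ 2 - (x.2 - y.2) ^ 2 := by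
        have h := mul_self_lt_mul_self (abs_nonneg (x.2 - y.2)) h1
        nlinarith only [h, sq_abs (x.2 - y.2)]
      apply div_nonneg
      · exact mul_nonneg (mul_nonneg (Real.Gamma_pos_of_pos (by linarith)).le
          (Real.rpow_nonneg e1 _)) (Real.rpow_nonneg e2 _)
      · apply mul_nonneg
        apply mul_nonneg
        apply mul_nonneg (Real.rpow_nonneg (by norm_num) _) (Real.sqrt_nonneg _)
        exact (Real.Gamma_pos_of_pos (by linarith)).le
        exact Real.rpow_nonneg (by positivity) _
    · exact le_refl 0
  have hF_nonneg : ∀ ρ ∈ Set.Ioi (0:ℝ), 0 ≤ F ρ := by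
    intro ρ hρ
    simp only [Set.mem_Ioi] at hρ
    simp only [hF_def]
    exact mul_nonneg (mul_nonneg (Set.indicator_nonneg (fun _ _ => one_pos.le) _)
      (hW_nonneg ρ)) (Real.rpow_nonneg hρ.le _)
  have part1 : 0 ≤ tauChi α ε x y := by
    rw [htau]; exact setIntegral_nonneg measurableSet_Ioi hF_nonneg
  refine ⟨part1, ?_⟩
  rcases le_or_gt ε |x.2 - y.2| with hεm | hmε
  · -- trivial case: the integrand vanishes
    have hzero : tauChi α ε x y = 0 := by
      rw [htau]
      rw [setIntegral_congr_fun measurableSet_Ioi (g := fun _ => (0:ℝ)) ?_, integral_zero]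
      intro ρ hρ
      simp only [Set.mem_Ioi] at hρ
      by_cases hmem : (x.1 - y.1, ρ) ∈ Bplus (0 : Pt d) ε
      · have hρε : ρ ≤ ε := hmem_rho ρ hρ.le hmem
        have hWz : Wker α x.2 y.2 ρ = 0 := by
          simp only [Wker]
          rw [if_neg]
          rintro ⟨h1, -⟩
          exact absurd h1 (not_lt.mpr (hρε.trans hεm))
        simp only [hF_def, hWz, mul_zero, zero_mul]
      · simp only [hF_def, Set.indicator_of_notMem hmem, zero_mul]
    rw [hzero]
    exact mul_nonneg hcfin.le (Real.rpow_nonneg (by positivity) _)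
  · -- main case
    set m : ℝ := |x.2 - y.2| with hm_def
    set s : ℝ := x.2 + y.2 with hs_def
    have hm0 : 0 ≤ m := abs_nonneg _
    have hms : m < s := by
      rw [hm_def, hs_def, abs_lt]; constructor <;> linarith
    have hs0 : 0 < s := lt_of_le_of_lt hm0 hms
    have hsm0 : 0 < s - m := by linarith
    have hspm0 : 0 < s + m := by linarith
    set cε : ℝ := min ε s with hcε_def
    set w : ℝ := (m + s) / 2 with hw_def
    set c1 : ℝ := min cε w with hc1_def
    have hmc : m < cε := lt_min hmε hms
    have hmw : m < w := by rw [hw_def]; linarith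
    have hmc1 : m ≤ c1 := le_min hmc.le hmw.le
    have hc1w : c1 ≤ w := min_le_right _ _
    have hc1c : c1 ≤ cε := min_le_left _ _
    have hcs : cε ≤ s := min_le_right _ _
    have hcε0 : 0 < cε := lt_of_le_of_lt hm0 hmc
    have hw0 : 0 < w := by rw [hw_def]; linarith
    have hws : w < s := by rw [hw_def]; linarith
    clear_value m s cε w c1
    have hxy : 0 < x.2 * y.2 := mul_pos hx hy
    have hE : 0 < (x.2 * y.2) ^ (2 * α) := Real.rpow_pos_of_pos hxy _
    have hs2m2 : s ^ 2 - m ^ 2 = 4 * (x.2 * y.2) := by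
      rw [hm_def, hs_def, sq_abs]; ring
    have hs2m2pos : 0 < s ^ 2 - m ^ 2 := by rw [hs2m2]; positivity
    have hc2m2 : (0:ℝ) ≤ cε ^ 2 - m ^ 2 := by
      have h := mul_nonneg (sub_nonneg.mpr hmc.le)
        (by linarith only [hm0, hmc] : (0:ℝ) ≤ cε + m)
      nlinarith only [h]
    set A1 : ℝ := K * Q ^ 2 * ((s - m) ^ (α - 1/2) * (s + m) ^ (α - 1/2)) *
      (c1 + m) ^ (α - 1/2 + 1) / (x.2 * y.2) ^ (2 * α) with hA1_def
    set A2 : ℝ := K * Q ^ 3 * ((s - m) ^ (α - 1/2) * (s + m) ^ (α - 1/2)) *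
      s ^ (α - 1/2 + 1) / (x.2 * y.2) ^ (2 * α) with hA2_def
    have hA1 : 0 ≤ A1 := by
      apply div_nonneg _ hE.le
      exact mul_nonneg (mul_nonneg (mul_nonneg hK.le (pow_nonneg hQ0.le 2))
        (mul_nonneg (Real.rpow_nonneg hsm0.le _) (Real.rpow_nonneg hspm0.le _)))
        (Real.rpow_nonneg (by linarith) _)
    have hA2 : 0 ≤ A2 := by
      apply div_nonneg _ hE.le
      exact mul_nonneg (mul_nonneg (mul_nonneg hK.le (pow_nonneg hQ0.le 3))
        (mul_nonneg (Real.rpow_nonneg hsm0.le _) (Real.rpow_nonneg hspm0.le _)))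
        (Real.rpow_nonneg hs0.le _)
    set g1 : ℝ → ℝ := (Set.Ioc m c1).indicator (fun ρ => A1 * (ρ - m) ^ (α - 1/2))
      with hg1_def
    set g2 : ℝ → ℝ := (Set.Ioc w cε).indicator (fun ρ => A2 * (s - ρ) ^ (α - 1/2))
      with hg2_def
    have hg1nn : ∀ ρ, 0 ≤ g1 ρ := fun ρ =>
      Set.indicator_nonneg (fun t ht => mul_nonneg hA1
        (Real.rpow_nonneg (by linarith [ht.1] : (0:ℝ) ≤ t - m) _)) ρ
    have hg2nn : ∀ ρ, 0 ≤ g2 ρ := fun ρ =>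
      Set.indicator_nonneg (fun t ht => mul_nonneg hA2
        (Real.rpow_nonneg (by linarith [ht.2] : (0:ℝ) ≤ s - t) _)) ρ
    clear_value A1 A2 g1 g2
    -- pointwise comparison
    have hFle : ∀ ρ ∈ Set.Ioi (0:ℝ), F ρ ≤ g1 ρ + g2 ρ := by
      intro ρ hρ
      simp only [Set.mem_Ioi] at hρ
      by_cases hmem : (x.1 - y.1, ρ) ∈ Bplus (0 : Pt d) ε
      swap
      · have : F ρ = 0 := by simp only [hF_def, Set.indicator_of_notMem hmem, zero_mul]
        rw [this]
        exact add_nonneg (hg1nn ρ) (hg2nn ρ)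
      have hρε : ρ ≤ ε := hmem_rho ρ hρ.le hmem
      by_cases hcond : |x.2 - y.2| < ρ ∧ ρ < x.2 + y.2
      swap
      · have hWz : Wker α x.2 y.2 ρ = 0 := by simp only [Wker]; rw [if_neg hcond]
        have : F ρ = 0 := by simp only [hF_def, hWz, mul_zero, zero_mul]
        rw [this]
        exact add_nonneg (hg1nn ρ) (hg2nn ρ)
      obtain ⟨h1, h2⟩ := hcond
      have h1m : m < ρ := by rw [hm_def]; exact h1
      have h2s : ρ < s := by rw [hs_def]; exact h2
      have hρc : ρ ≤ cε := by rw [hcε_def]; exact le_min hρε h2s.le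
      have hρmnn : (0:ℝ) ≤ ρ - m := by linarith
      have hρpmnn : (0:ℝ) ≤ ρ + m := by linarith
      have hsρnn : (0:ℝ) ≤ s - ρ := by linarith
      have hsρpnn : (0:ℝ) ≤ s + ρ := by linarith
      have hne1 : ((2:ℝ) ^ (2 * α - 1)) ≠ 0 := (Real.rpow_pos_of_pos two_pos _).ne'
      have hne2 : Real.sqrt π ≠ 0 := (Real.sqrt_pos.mpr Real.pi_pos).ne'
      have hne3 : Real.Gamma (α + 1 / 2) ≠ 0 := (Real.Gamma_pos_of_pos (by linarith)).ne'
      have hne4 : ((x.2 * y.2) ^ (2 * α)) ≠ 0 := hE.ne'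
      have hne5 : (ρ ^ (2 * α) : ℝ) ≠ 0 := (Real.rpow_pos_of_pos hρ _).ne'
      have hval : F ρ = K * ((s - ρ) ^ (α - 1/2) * (s + ρ) ^ (α - 1/2) *
          ((ρ - m) ^ (α - 1/2) * ((ρ + m) ^ (α - 1/2) * ρ))) / (x.2 * y.2) ^ (2 * α) := by
        simp only [hF_def, Set.indicator_of_mem hmem]
        simp only [Wker]
        rw [if_pos ⟨h1, h2⟩]
        have e1 : (x.2 + y.2) ^ 2 - ρ ^ 2 = (s - ρ) * (s + ρ) := by rw [hs_def]; ring
        have e2 : ρ ^ 2 - (x.2 - y.2) ^ 2 = (ρ - m) * (ρ + m) := by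
          rw [hm_def, ← sq_abs (x.2 - y.2)]; ring
        rw [e1, e2, Real.mul_rpow hsρnn hsρpnn, Real.mul_rpow hρmnn hρpmnn,
          Real.mul_rpow hxy.le hρ.le, Real.rpow_add hρ (2 * α) 1, Real.rpow_one, hK_def]
        field_simp
      rcases le_or_gt ρ c1 with hρ1 | hρ1
      · -- first piece
        have hρw : ρ ≤ w := le_trans hρ1 hc1w
        have hg1v : g1 ρ = A1 * (ρ - m) ^ (α - 1/2) := by
          rw [hg1_def]; exact Set.indicator_of_mem (Set.mem_Ioc.mpr ⟨h1m, hρ1⟩) _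
        have b1 : (s - ρ) ^ (α - 1/2) ≤ Q * (s - m) ^ (α - 1/2) := by
          rw [hQ_def]
          exact aux_rpow_bound hsm0 (by rw [hw_def] at hρw; linarith) (by linarith)
        have b2 : (s + ρ) ^ (α - 1/2) ≤ Q * (s + m) ^ (α - 1/2) := by
          rw [hQ_def]
          exact aux_rpow_bound hspm0 (by linarith) (by linarith)
        have hc1m0 : 0 < c1 + m := by linarith
        have b3 : (ρ + m) ^ (α - 1/2) * ρ ≤ (c1 + m) ^ (α - 1/2 + 1) := by
          rcases le_or_gt 0 (α - 1/2) with hps | hps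
          · calc (ρ + m) ^ (α - 1/2) * ρ ≤ (c1 + m) ^ (α - 1/2) * (c1 + m) := by
                  apply mul_le_mul (Real.rpow_le_rpow hρpmnn (by linarith) hps)
                    (by linarith) hρ.le (Real.rpow_nonneg hc1m0.le _)
              _ = (c1 + m) ^ (α - 1/2 + 1) := (Real.rpow_add_one hc1m0.ne' _).symm
          · calc (ρ + m) ^ (α - 1/2) * ρ ≤ ρ ^ (α - 1/2) * ρ :=
                  mul_le_mul_of_nonneg_right
                    (Real.rpow_le_rpow_of_nonpos hρ (by linarith) hps.le) hρ.le
              _ = ρ ^ (α - 1/2 + 1) := (Real.rpow_add_one hρ.ne' _).symm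
              _ ≤ (c1 + m) ^ (α - 1/2 + 1) := Real.rpow_le_rpow hρ.le (by linarith) hp1.le
        have c2nn : (0:ℝ) ≤ (ρ - m) ^ (α - 1/2) := Real.rpow_nonneg hρmnn _
        have c3nn : (0:ℝ) ≤ (ρ + m) ^ (α - 1/2) * ρ :=
          mul_nonneg (Real.rpow_nonneg hρpmnn _) hρ.le
        have q1nn : (0:ℝ) ≤ Q * (s - m) ^ (α - 1/2) :=
          mul_nonneg hQ0.le (Real.rpow_nonneg hsm0.le _)
        have q2nn : (0:ℝ) ≤ Q * (s + m) ^ (α - 1/2) :=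
          mul_nonneg hQ0.le (Real.rpow_nonneg hspm0.le _)
        have hb12 : (s - ρ) ^ (α - 1/2) * (s + ρ) ^ (α - 1/2) ≤
            (Q * (s - m) ^ (α - 1/2)) * (Q * (s + m) ^ (α - 1/2)) :=
          mul_le_mul b1 b2 (Real.rpow_nonneg hsρpnn _) q1nn
        have hb34 : (ρ - m) ^ (α - 1/2) * ((ρ + m) ^ (α - 1/2) * ρ) ≤
            (ρ - m) ^ (α - 1/2) * (c1 + m) ^ (α - 1/2 + 1) :=
          mul_le_mul_of_nonneg_left b3 c2nn
        have hnum := mul_le_mul hb12 hb34 (mul_nonneg c2nn c3nn) (mul_nonneg q1nn q2nn)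
        calc F ρ = K * ((s - ρ) ^ (α - 1/2) * (s + ρ) ^ (α - 1/2) *
              ((ρ - m) ^ (α - 1/2) * ((ρ + m) ^ (α - 1/2) * ρ))) / (x.2 * y.2) ^ (2 * α) := hval
          _ ≤ K * ((Q * (s - m) ^ (α - 1/2)) * (Q * (s + m) ^ (α - 1/2)) *
              ((ρ - m) ^ (α - 1/2) * (c1 + m) ^ (α - 1/2 + 1))) / (x.2 * y.2) ^ (2 * α) :=
            (div_le_div_iff_of_pos_right hE).mpr (mul_le_mul_of_nonneg_left hnum hK.le)
          _ = A1 * (ρ - m) ^ (α - 1/2) := by rw [hA1_def]; ring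
          _ = g1 ρ := hg1v.symm
          _ ≤ g1 ρ + g2 ρ := by linarith [hg2nn ρ]
      · -- second piece
        have hwc : w < cε := by
          by_contra hcon
          push_neg at hcon
          have : c1 = cε := by rw [hc1_def]; exact min_eq_left hcon
          rw [this] at hρ1
          linarith
        have hc1w' : c1 = w := by rw [hc1_def]; exact min_eq_right hwc.le
        have hρw : w < ρ := by rw [← hc1w']; exact hρ1
        have hg2v : g2 ρ = A2 * (s - ρ) ^ (α - 1/2) := by
          rw [hg2_def]; exact Set.indicator_of_mem (Set.mem_Ioc.mpr ⟨hρw, hρc⟩) _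
        have b1' : (ρ - m) ^ (α - 1/2) ≤ Q * (s - m) ^ (α - 1/2) := by
          rw [hQ_def]
          exact aux_rpow_bound hsm0 (by rw [hw_def] at hρw; linarith) (by linarith)
        have b2' : (ρ + m) ^ (α - 1/2) ≤ Q * (s + m) ^ (α - 1/2) := by
          rw [hQ_def]
          exact aux_rpow_bound hspm0 (by rw [hw_def] at hρw; linarith) (by linarith)
        have b3' : (s + ρ) ^ (α - 1/2) * ρ ≤ Q * s ^ (α - 1/2 + 1) := by
          have hb : (s + ρ) ^ (α - 1/2) ≤ Q * s ^ (α - 1/2) := by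
            rw [hQ_def]
            exact aux_rpow_bound hs0 (by linarith) (by linarith)
          calc (s + ρ) ^ (α - 1/2) * ρ ≤ (Q * s ^ (α - 1/2)) * s :=
                mul_le_mul hb h2s.le hρ.le
                  (mul_nonneg hQ0.le (Real.rpow_nonneg hs0.le _))
            _ = Q * s ^ (α - 1/2 + 1) := by rw [Real.rpow_add_one hs0.ne']; ring
        have c1nn : (0:ℝ) ≤ (s - ρ) ^ (α - 1/2) := Real.rpow_nonneg hsρnn _
        have c3nn : (0:ℝ) ≤ (s + ρ) ^ (α - 1/2) * ρ :=
          mul_nonneg (Real.rpow_nonneg hsρpnn _) hρ.le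
        have q1nn : (0:ℝ) ≤ Q * (s - m) ^ (α - 1/2) :=
          mul_nonneg hQ0.le (Real.rpow_nonneg hsm0.le _)
        have q2nn : (0:ℝ) ≤ Q * (s + m) ^ (α - 1/2) :=
          mul_nonneg hQ0.le (Real.rpow_nonneg hspm0.le _)
        have hb12 : (ρ - m) ^ (α - 1/2) * (ρ + m) ^ (α - 1/2) ≤
            (Q * (s - m) ^ (α - 1/2)) * (Q * (s + m) ^ (α - 1/2)) :=
          mul_le_mul b1' b2' (Real.rpow_nonneg hρpmnn _) q1nn
        have hb34 : (s - ρ) ^ (α - 1/2) * ((s + ρ) ^ (α - 1/2) * ρ) ≤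
            (s - ρ) ^ (α - 1/2) * (Q * s ^ (α - 1/2 + 1)) :=
          mul_le_mul_of_nonneg_left b3' c1nn
        have hnum := mul_le_mul hb12 hb34
          (mul_nonneg c1nn c3nn) (mul_nonneg q1nn q2nn)
        calc F ρ = K * ((s - ρ) ^ (α - 1/2) * (s + ρ) ^ (α - 1/2) *
              ((ρ - m) ^ (α - 1/2) * ((ρ + m) ^ (α - 1/2) * ρ))) / (x.2 * y.2) ^ (2 * α) := hval
          _ = K * ((ρ - m) ^ (α - 1/2) * (ρ + m) ^ (α - 1/2) *
              ((s - ρ) ^ (α - 1/2) * ((s + ρ) ^ (α - 1/2) * ρ))) / (x.2 * y.2) ^ (2 * α) := by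
            ring
          _ ≤ K * ((Q * (s - m) ^ (α - 1/2)) * (Q * (s + m) ^ (α - 1/2)) *
              ((s - ρ) ^ (α - 1/2) * (Q * s ^ (α - 1/2 + 1)))) / (x.2 * y.2) ^ (2 * α) :=
            (div_le_div_iff_of_pos_right hE).mpr (mul_le_mul_of_nonneg_left hnum hK.le)
          _ = A2 * (s - ρ) ^ (α - 1/2) := by rw [hA2_def]; ring
          _ = g2 ρ := hg2v.symm
          _ ≤ g1 ρ + g2 ρ := by linarith [hg1nn ρ]
    -- integrability of the dominating functions
    have hint1 : Integrable g1 (volume.restrict (Set.Ioi (0:ℝ))) := by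
      have h0 := (aux_integrableOn_sub_rpow m c1 hp hmc1).const_mul A1
      rw [hg1_def]
      exact (MeasureTheory.IntegrableOn.integrable_indicator h0 measurableSet_Ioc).restrict
    have hint2 : Integrable g2 (volume.restrict (Set.Ioi (0:ℝ))) := by
      rcases le_or_gt w cε with hwcle | hwcgt
      · have h0 := (aux_integrableOn_rsub_rpow s w cε hp hwcle).const_mul A2
        rw [hg2_def]
        exact (MeasureTheory.IntegrableOn.integrable_indicator h0 measurableSet_Ioc).restrict
      · have hempty : Set.Ioc w cε = ∅ := Set.Ioc_eq_empty (not_lt.mpr hwcgt.le)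
        rw [hg2_def, hempty]
        simp only [Set.indicator_empty]
        exact integrable_zero _ _ _
    -- integrals of the dominating functions
    have hsub1 : Set.Ioc m c1 ⊆ Set.Ioi (0:ℝ) := fun t ht =>
      Set.mem_Ioi.mpr (lt_of_le_of_lt hm0 ht.1)
    have hsub2 : Set.Ioc w cε ⊆ Set.Ioi (0:ℝ) := fun t ht =>
      Set.mem_Ioi.mpr (lt_trans hw0 ht.1)
    have hI1 : ∫ ρ in Set.Ioi (0:ℝ), g1 ρ =
        A1 * ((c1 - m) ^ (α - 1/2 + 1) / (α - 1/2 + 1)) := by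
      rw [hg1_def, integral_indicator measurableSet_Ioc,
        Measure.restrict_restrict measurableSet_Ioc,
        Set.inter_eq_left.mpr hsub1, integral_const_mul,
        aux_integral_sub_rpow hp hmc1]
    set T : ℝ := (s ^ 2 - m ^ 2) ^ (α - 1/2) * (cε ^ 2 - m ^ 2) ^ (α - 1/2 + 1) /
      (x.2 * y.2) ^ (2 * α) with hT_def
    have hT0 : 0 ≤ T := by
      apply div_nonneg _ hE.le
      exact mul_nonneg (Real.rpow_nonneg hs2m2pos.le _) (Real.rpow_nonneg hc2m2 _)
    clear_value T
    have e1 : (s - m) ^ (α - 1/2) * (s + m) ^ (α - 1/2) = (s ^ 2 - m ^ 2) ^ (α - 1/2) := by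
      rw [← Real.mul_rpow hsm0.le hspm0.le]
      congr 1
      ring
    -- bound on the first integral
    have hB1 : A1 * ((c1 - m) ^ (α - 1/2 + 1) / (α - 1/2 + 1)) ≤
        (K * Q ^ 3 / (α - 1/2 + 1)) * T := by
      have hc1m0' : (0:ℝ) ≤ c1 + m := by linarith [hmc1, hm0]
      have e2 : (c1 + m) ^ (α - 1/2 + 1) * (c1 - m) ^ (α - 1/2 + 1) =
          (c1 ^ 2 - m ^ 2) ^ (α - 1/2 + 1) := by
        rw [← Real.mul_rpow hc1m0' (by linarith)]
        congr 1
        ring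
      have hc10 : (0:ℝ) ≤ c1 := le_trans hm0 hmc1
      have e3 : (c1 ^ 2 - m ^ 2) ^ (α - 1/2 + 1) ≤ (cε ^ 2 - m ^ 2) ^ (α - 1/2 + 1) := by
        apply Real.rpow_le_rpow
        · have h := mul_nonneg (sub_nonneg.mpr hmc1)
            (by linarith only [hm0, hmc1] : (0:ℝ) ≤ c1 + m)
          nlinarith only [h]
        · have h := mul_nonneg (sub_nonneg.mpr hc1c)
            (by linarith only [hc10, hc1c] : (0:ℝ) ≤ cε + c1)
          nlinarith only [h]
        · exact hp1.le
      calc A1 * ((c1 - m) ^ (α - 1/2 + 1) / (α - 1/2 + 1))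
          = (K * Q ^ 2 / (α - 1/2 + 1)) * (((s - m) ^ (α - 1/2) * (s + m) ^ (α - 1/2)) *
            ((c1 + m) ^ (α - 1/2 + 1) * (c1 - m) ^ (α - 1/2 + 1))) / (x.2 * y.2) ^ (2 * α) := by
            rw [hA1_def]; ring
        _ = (K * Q ^ 2 / (α - 1/2 + 1)) * ((s ^ 2 - m ^ 2) ^ (α - 1/2) *
            (c1 ^ 2 - m ^ 2) ^ (α - 1/2 + 1)) / (x.2 * y.2) ^ (2 * α) := by rw [e1, e2]
        _ ≤ (K * Q ^ 3 / (α - 1/2 + 1)) * ((s ^ 2 - m ^ 2) ^ (α - 1/2) *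
            (cε ^ 2 - m ^ 2) ^ (α - 1/2 + 1)) / (x.2 * y.2) ^ (2 * α) := by
            have hcoef : K * Q ^ 2 / (α - 1/2 + 1) ≤ K * Q ^ 3 / (α - 1/2 + 1) :=
              (div_le_div_iff_of_pos_right hp1).mpr
                (mul_le_mul_of_nonneg_left (pow_le_pow_right₀ hQ1 (by norm_num)) hK.le)
            apply (div_le_div_iff_of_pos_right hE).mpr
            exact mul_le_mul hcoef
              (mul_le_mul_of_nonneg_left e3 (Real.rpow_nonneg hs2m2pos.le _))
              (mul_nonneg (Real.rpow_nonneg hs2m2pos.le _)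
                (Real.rpow_nonneg (by
                  have h := mul_nonneg (sub_nonneg.mpr hmc1)
                    (by linarith only [hm0, hmc1] : (0:ℝ) ≤ c1 + m)
                  nlinarith only [h]) _))
              (le_trans (div_nonneg (mul_nonneg hK.le (pow_nonneg hQ0.le 2)) hp1.le) hcoef)
        _ = (K * Q ^ 3 / (α - 1/2 + 1)) * T := by rw [hT_def]; ring
    -- bound on the second integral
    have hI2 : ∫ ρ in Set.Ioi (0:ℝ), g2 ρ ≤
        (K * Q ^ 3 * 2 ^ (α - 1/2 + 1) / (α - 1/2 + 1)) * T := by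
      have hRHSnn : 0 ≤ (K * Q ^ 3 * 2 ^ (α - 1/2 + 1) / (α - 1/2 + 1)) * T := by
        apply mul_nonneg _ hT0
        apply div_nonneg _ hp1.le
        exact mul_nonneg (mul_nonneg hK.le (pow_nonneg hQ0.le 3))
          (Real.rpow_nonneg (by norm_num) _)
      rcases le_or_gt w cε with hwcle | hwcgt
      swap
      · have hempty : Set.Ioc w cε = ∅ := Set.Ioc_eq_empty (not_lt.mpr hwcgt.le)
        rw [hg2_def, hempty]
        simp only [Set.indicator_empty]
        simpa using hRHSnn
      have hIeq : ∫ ρ in Set.Ioi (0:ℝ), g2 ρ =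
          A2 * ∫ ρ in Set.Ioc w cε, (s - ρ) ^ (α - 1/2) := by
        rw [hg2_def, integral_indicator measurableSet_Ioc,
          Measure.restrict_restrict measurableSet_Ioc,
          Set.inter_eq_left.mpr hsub2, integral_const_mul]
      have hIle : ∫ ρ in Set.Ioc w cε, (s - ρ) ^ (α - 1/2) ≤
          ((s - m)/2) ^ (α - 1/2 + 1) / (α - 1/2 + 1) := by
        have h := aux_integral_rsub_rpow hp hwcle hcs
        have hsw : s - w = (s - m)/2 := by rw [hw_def]; ring
        rw [hsw] at h
        exact h
      have hkey : s * ((s - m)/2) ≤ 2 * (cε ^ 2 - m ^ 2) := by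
        have hsq : (0:ℝ) ≤ (cε - w) * (cε + w) :=
          mul_nonneg (by linarith only [hwcle]) (by linarith only [hw0, hcε0])
        have hw2sq : w ^ 2 = ((m + s)/2) ^ 2 := by rw [hw_def]
        nlinarith only [hsq, hw2sq, mul_nonneg hm0 hsm0.le]
      have e4 : s ^ (α - 1/2 + 1) * ((s - m)/2) ^ (α - 1/2 + 1) =
          (s * ((s - m)/2)) ^ (α - 1/2 + 1) :=
        (Real.mul_rpow hs0.le (by linarith)).symm
      have e5 : (s * ((s - m)/2)) ^ (α - 1/2 + 1) ≤
          (2 * (cε ^ 2 - m ^ 2)) ^ (α - 1/2 + 1) :=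
        Real.rpow_le_rpow (mul_nonneg hs0.le (by linarith)) hkey hp1.le
      have e6 : (2 * (cε ^ 2 - m ^ 2)) ^ (α - 1/2 + 1) =
          2 ^ (α - 1/2 + 1) * (cε ^ 2 - m ^ 2) ^ (α - 1/2 + 1) :=
        Real.mul_rpow (by norm_num) hc2m2
      calc ∫ ρ in Set.Ioi (0:ℝ), g2 ρ
          = A2 * ∫ ρ in Set.Ioc w cε, (s - ρ) ^ (α - 1/2) := hIeq
        _ ≤ A2 * (((s - m)/2) ^ (α - 1/2 + 1) / (α - 1/2 + 1)) :=
            mul_le_mul_of_nonneg_left hIle hA2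
        _ = (K * Q ^ 3 / (α - 1/2 + 1)) * (((s - m) ^ (α - 1/2) * (s + m) ^ (α - 1/2)) *
            (s ^ (α - 1/2 + 1) * ((s - m)/2) ^ (α - 1/2 + 1))) / (x.2 * y.2) ^ (2 * α) := by
            rw [hA2_def]; ring
        _ = (K * Q ^ 3 / (α - 1/2 + 1)) * ((s ^ 2 - m ^ 2) ^ (α - 1/2) *
            (s * ((s - m)/2)) ^ (α - 1/2 + 1)) / (x.2 * y.2) ^ (2 * α) := by rw [e1, e4]
        _ ≤ (K * Q ^ 3 / (α - 1/2 + 1)) * ((s ^ 2 - m ^ 2) ^ (α - 1/2) *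
            (2 ^ (α - 1/2 + 1) * (cε ^ 2 - m ^ 2) ^ (α - 1/2 + 1))) / (x.2 * y.2) ^ (2 * α) := by
            apply (div_le_div_iff_of_pos_right hE).mpr
            apply mul_le_mul_of_nonneg_left _
              (div_nonneg (mul_nonneg hK.le (pow_nonneg hQ0.le 3)) hp1.le)
            rw [← e6]
            exact mul_le_mul_of_nonneg_left e5 (Real.rpow_nonneg hs2m2pos.le _)
        _ = (K * Q ^ 3 * 2 ^ (α - 1/2 + 1) / (α - 1/2 + 1)) * T := by rw [hT_def]; ring
    -- core bound
    have hcore : tauChi α ε x y ≤ CC * T := by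
      have hae0 : 0 ≤ᵐ[volume.restrict (Set.Ioi (0:ℝ))] F :=
        ae_restrict_of_forall_mem measurableSet_Ioi hF_nonneg
      have haele : F ≤ᵐ[volume.restrict (Set.Ioi (0:ℝ))] fun ρ => g1 ρ + g2 ρ :=
        ae_restrict_of_forall_mem measurableSet_Ioi hFle
      calc tauChi α ε x y = ∫ ρ in Set.Ioi (0:ℝ), F ρ := htau
        _ ≤ ∫ ρ in Set.Ioi (0:ℝ), (g1 ρ + g2 ρ) :=
            integral_mono_of_nonneg hae0 (hint1.add hint2) haele
        _ = (∫ ρ in Set.Ioi (0:ℝ), g1 ρ) + ∫ ρ in Set.Ioi (0:ℝ), g2 ρ :=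
            integral_add hint1 hint2
        _ ≤ (K * Q ^ 3 / (α - 1/2 + 1)) * T +
            (K * Q ^ 3 * 2 ^ (α - 1/2 + 1) / (α - 1/2 + 1)) * T := by
            rw [hI1]
            exact add_le_add hB1 hI2
        _ = CC * T := by rw [hCC_def]; ring
    -- final case analysis
    have hr0 : 0 < (ε / x.2) ^ (2 * α + 1) := Real.rpow_pos_of_pos (by positivity) _
    rcases le_or_gt x.2 (2 * ε) with hcase | hcase
    · -- ε at least comparable to x.2
      have hTb : T ≤ 4 ^ (2 * α) := by
        have h1 : (cε ^ 2 - m ^ 2) ^ (α - 1/2 + 1) ≤ (s ^ 2 - m ^ 2) ^ (α - 1/2 + 1) :=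
          Real.rpow_le_rpow hc2m2 (by
            have h := mul_nonneg (sub_nonneg.mpr hcs)
              (by linarith only [hcε0, hcs] : (0:ℝ) ≤ s + cε)
            nlinarith only [h]) hp1.le
        have h2 : (s ^ 2 - m ^ 2) ^ (α - 1/2) * (s ^ 2 - m ^ 2) ^ (α - 1/2 + 1) =
            (s ^ 2 - m ^ 2) ^ (2 * α) := by
          rw [← Real.rpow_add hs2m2pos]
          congr 1
          ring
        have h3 : (s ^ 2 - m ^ 2) ^ (2 * α) = 4 ^ (2 * α) * (x.2 * y.2) ^ (2 * α) := by
          rw [hs2m2, Real.mul_rpow (by norm_num) hxy.le]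
        calc T = (s ^ 2 - m ^ 2) ^ (α - 1/2) * (cε ^ 2 - m ^ 2) ^ (α - 1/2 + 1) /
              (x.2 * y.2) ^ (2 * α) := hT_def
          _ ≤ (s ^ 2 - m ^ 2) ^ (α - 1/2) * (s ^ 2 - m ^ 2) ^ (α - 1/2 + 1) /
              (x.2 * y.2) ^ (2 * α) :=
            (div_le_div_iff_of_pos_right hE).mpr
              (mul_le_mul_of_nonneg_left h1 (Real.rpow_nonneg hs2m2pos.le _))
          _ = 4 ^ (2 * α) * (x.2 * y.2) ^ (2 * α) / (x.2 * y.2) ^ (2 * α) := by rw [h2, h3]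
          _ = 4 ^ (2 * α) := by field_simp
      have hone : (1:ℝ) ≤ 2 ^ (2 * α + 1) * (ε / x.2) ^ (2 * α + 1) := by
        have h21 : (1:ℝ) ≤ 2 * (ε / x.2) := by
          rw [show (2:ℝ) * (ε / x.2) = 2 * ε / x.2 by ring]
          exact (one_le_div hx).mpr hcase
        calc (1:ℝ) = 1 ^ (2 * α + 1) := (Real.one_rpow _).symm
          _ ≤ (2 * (ε / x.2)) ^ (2 * α + 1) :=
              Real.rpow_le_rpow (by norm_num) h21 (by linarith)
          _ = 2 ^ (2 * α + 1) * (ε / x.2) ^ (2 * α + 1) :=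
              Real.mul_rpow (by norm_num) (by positivity)
      have h4p : (0:ℝ) ≤ 4 ^ (α - 1/2) := Real.rpow_nonneg (by norm_num) _
      have h2h : (0:ℝ) ≤ 2 ^ (α + 1/2) := Real.rpow_nonneg (by norm_num) _
      have h42 : (0:ℝ) ≤ 4 ^ (2 * α) := Real.rpow_nonneg (by norm_num) _
      calc tauChi α ε x y ≤ CC * T := hcore
        _ ≤ CC * 4 ^ (2 * α) := mul_le_mul_of_nonneg_left hTb hCC.le
        _ = CC * 4 ^ (2 * α) * 1 := by ring
        _ ≤ CC * 4 ^ (2 * α) * (2 ^ (2 * α + 1) * (ε / x.2) ^ (2 * α + 1)) :=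
            mul_le_mul_of_nonneg_left hone (mul_nonneg hCC.le h42)
        _ ≤ cfin * (ε / x.2) ^ (2 * α + 1) := by
            rw [hcfin_def]
            linarith only [mul_nonneg (mul_nonneg (mul_nonneg hCC.le h4p) h2h) hr0.le]
    · -- ε small compared to x.2
      have hcεε : cε = ε := by rw [hcε_def]; exact min_eq_left (by linarith)
      have hym : x.2 - y.2 ≤ m := by rw [hm_def]; exact le_abs_self _
      have hyd : x.2 / 2 < y.2 := by linarith
      have hxx2 : 0 < x.2 * (x.2 / 2) := by positivity
      have hxyge : x.2 * (x.2 / 2) ≤ x.2 * y.2 :=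
        mul_le_mul_of_nonneg_left hyd.le hx.le
      have n1 : (cε ^ 2 - m ^ 2) ^ (α - 1/2 + 1) ≤ (ε ^ 2) ^ (α - 1/2 + 1) := by
        apply Real.rpow_le_rpow hc2m2 _ hp1.le
        rw [hcεε]
        nlinarith only [sq_nonneg m]
      have n2 : (s ^ 2 - m ^ 2) ^ (α - 1/2) = 4 ^ (α - 1/2) * (x.2 * y.2) ^ (α - 1/2) := by
        rw [hs2m2, Real.mul_rpow (by norm_num) hxy.le]
      have n3 : (x.2 * y.2) ^ (α - 1/2) / (x.2 * y.2) ^ (2 * α) =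
          (x.2 * y.2) ^ (-(α + 1/2)) := by
        rw [← Real.rpow_sub hxy]
        congr 1
        ring
      have n4 : (x.2 * y.2) ^ (-(α + 1/2)) ≤ (x.2 * (x.2 / 2)) ^ (-(α + 1/2)) :=
        Real.rpow_le_rpow_of_nonpos hxx2 hxyge (by linarith)
      have n5 : (x.2 * (x.2 / 2)) ^ (-(α + 1/2)) =
          2 ^ (α + 1/2) * (x.2 ^ 2) ^ (-(α + 1/2)) := by
        rw [show x.2 * (x.2 / 2) = x.2 ^ 2 / 2 by ring,
          Real.div_rpow (by positivity) (by norm_num), div_eq_mul_inv,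
          Real.rpow_neg (by norm_num : (0:ℝ) ≤ 2), inv_inv, mul_comm]
      have n6 : (ε ^ 2) ^ (α - 1/2 + 1) * (x.2 ^ 2) ^ (-(α + 1/2)) =
          (ε / x.2) ^ (2 * α + 1) := by
        have eA : ((ε ^ 2 : ℝ)) ^ (α - 1/2 + 1) = ε ^ (2 * α + 1) := by
          rw [← Real.rpow_natCast ε 2, ← Real.rpow_mul hε.le]
          congr 1
          push_cast
          ring
        have eB : ((x.2 ^ 2 : ℝ)) ^ (-(α + 1/2)) = x.2 ^ (-(2 * α + 1)) := by
          rw [← Real.rpow_natCast x.2 2, ← Real.rpow_mul hx.le]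
          congr 1
          push_cast
          ring
        rw [eA, eB, Real.rpow_neg hx.le, ← div_eq_mul_inv, ← Real.div_rpow hε.le hx.le]
      have hTb : T ≤ 4 ^ (α - 1/2) * 2 ^ (α + 1/2) * (ε / x.2) ^ (2 * α + 1) := by
        have hxyp : (0:ℝ) ≤ (x.2 * y.2) ^ (α - 1/2) := Real.rpow_nonneg hxy.le _
        have h4p : (0:ℝ) ≤ 4 ^ (α - 1/2) := Real.rpow_nonneg (by norm_num) _
        calc T = 4 ^ (α - 1/2) * ((cε ^ 2 - m ^ 2) ^ (α - 1/2 + 1) *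
              ((x.2 * y.2) ^ (α - 1/2) / (x.2 * y.2) ^ (2 * α))) := by
              rw [hT_def, n2]; ring
          _ = 4 ^ (α - 1/2) * ((cε ^ 2 - m ^ 2) ^ (α - 1/2 + 1) *
              (x.2 * y.2) ^ (-(α + 1/2))) := by rw [n3]
          _ ≤ 4 ^ (α - 1/2) * ((ε ^ 2) ^ (α - 1/2 + 1) *
              (x.2 * (x.2 / 2)) ^ (-(α + 1/2))) := by
              apply mul_le_mul_of_nonneg_left _ h4p
              exact mul_le_mul n1 n4 (Real.rpow_nonneg hxy.le _)
                (Real.rpow_nonneg (by positivity) _)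
          _ = 4 ^ (α - 1/2) * 2 ^ (α + 1/2) * ((ε ^ 2) ^ (α - 1/2 + 1) *
              (x.2 ^ 2) ^ (-(α + 1/2))) := by rw [n5]; ring
          _ = 4 ^ (α - 1/2) * 2 ^ (α + 1/2) * (ε / x.2) ^ (2 * α + 1) := by rw [n6]
      have h4p : (0:ℝ) ≤ 4 ^ (α - 1/2) := Real.rpow_nonneg (by norm_num) _
      have h2h : (0:ℝ) ≤ 2 ^ (α + 1/2) := Real.rpow_nonneg (by norm_num) _
      have h42 : (0:ℝ) ≤ 4 ^ (2 * α) := Real.rpow_nonneg (by norm_num) _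
      have h221 : (0:ℝ) ≤ 2 ^ (2 * α + 1) := Real.rpow_nonneg (by norm_num) _
      calc tauChi α ε x y ≤ CC * T := hcore
        _ ≤ CC * (4 ^ (α - 1/2) * 2 ^ (α + 1/2) * (ε / x.2) ^ (2 * α + 1)) :=
            mul_le_mul_of_nonneg_left hTb hCC.le
        _ ≤ cfin * (ε / x.2) ^ (2 * α + 1) := by
            rw [hcfin_def]
            linarith only [mul_nonneg (mul_nonneg (mul_nonneg hCC.le h42) h221) hr0.le]


end
end

section
/- There exists a constant c > 0, depending only on α and d, such that for every x ∈ ℝ^d_+ with x_d > ε and every ε > 0, ν_α(C^+(x,ε)) ≤ c ν_α(B^+(0,ε)) (x_d / ε)^{2α+1}. -/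
open MeasureTheory Real Set
open scoped ENNReal RealInnerProductSpace

noncomputable section

lemma key_real (α K : ℝ) (hα : -(1/2:ℝ) < α) (hK : 0 < K) (n : ℕ) (ε x2 : ℝ)
    (hε : 0 < ε) (hx : ε < x2) :
    ε ^ n * ((x2 + ε) ^ (2*α+1) / K * (2 * ε)) ≤
      (2 ^ (3*(2*α+1)+3) * 2 ^ n * (x2 / ε) ^ (2*α+1)) *
        ((ε/2) ^ n * ((ε/4) ^ (2*α+1) / K * (ε/4))) := by
  have hβ : 0 < 2*α+1 := by linarith
  have hx2 : 0 < x2 := lt_trans hε hx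
  have h1 : (x2 + ε) ^ (2*α+1) ≤ 2 ^ (2*α+1) * x2 ^ (2*α+1) := by
    rw [← Real.mul_rpow (by norm_num) hx2.le]
    exact Real.rpow_le_rpow (by linarith) (by linarith) hβ.le
  obtain ⟨β, hβdef⟩ : ∃ β : ℝ, 2*α+1 = β := ⟨_, rfl⟩
  rw [hβdef] at h1 hβ ⊢
  have hmul : ∀ a b : ℝ, (2:ℝ)^(a+b) = 2^a*2^b := fun a b =>
    Real.rpow_add (by norm_num) a b
  have h3 : (2:ℝ) ^ (3*β+3) =
      2 ^ β * 2 ^ β * 2 ^ β * 8 := by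
    rw [show 3*β+3 = β+(β+(β+3)) by ring, hmul, hmul, hmul,
      show (2:ℝ)^(3:ℝ) = 8 by
        rw [show (3:ℝ) = ((3:ℕ):ℝ) by norm_num, Real.rpow_natCast]; norm_num]
    ring
  have h4 : ((4:ℝ)) ^ β = 2 ^ β * 2 ^ β := by
    rw [← Real.mul_rpow (by norm_num) (by norm_num)]; norm_num
  have hdiv : (x2 / ε) ^ β = x2 ^ β / ε ^ β :=
    Real.div_rpow hx2.le hε.le _
  have hdiv2 : (ε / 4) ^ β = ε ^ β / 4 ^ β :=
    Real.div_rpow hε.le (by norm_num) _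
  have ha : (0:ℝ) < 2 ^ β := Real.rpow_pos_of_pos (by norm_num) _
  have he : (0:ℝ) < ε ^ β := Real.rpow_pos_of_pos hε _
  calc ε ^ n * ((x2 + ε) ^ β / K * (2 * ε))
      ≤ ε ^ n * ((2 ^ β * x2 ^ β) / K * (2 * ε)) := by gcongr
    _ = (2 ^ (3*β+3) * 2 ^ n * (x2 / ε) ^ β) *
        ((ε/2) ^ n * ((ε/4) ^ β / K * (ε/4))) := by
        rw [h3, hdiv, hdiv2, h4, div_pow]
        field_simp
        ring

/-- There is `c > 0` depending only on `α` and `d` such that for every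
`ε > 0` and every `x ∈ ℝ^d_+` with `x_d > ε`,
`ν_α(C^+(x,ε)) ≤ c ν_α(B^+(0,ε)) (x_d/ε)^{2α+1}`. -/
theorem measure_Cplus_le_large (α : ℝ) (hα : -(1/2 : ℝ) < α) (d : ℕ) (hd : 2 ≤ d) :
    ∃ c : ℝ, 0 < c ∧ ∀ ε : ℝ, 0 < ε → ∀ x : Pt d, 0 < x.2 → ε < x.2 →
      nu α d (Cplus x ε) ≤
        ENNReal.ofReal (c * (x.2 / ε) ^ (2 * α + 1)) * nu α d (Bplus (0 : Pt d) ε) := by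
  set E := EuclideanSpace ℝ (Fin (d - 1))
  set K : ℝ := (2 * π) ^ ((d - 1 : ℝ) / 2) * 2 ^ α * Real.Gamma (α + 1) with hKdef
  have hK : 0 < K := by
    apply mul_pos (mul_pos _ _)
    · exact Real.Gamma_pos_of_pos (by linarith)
    · exact Real.rpow_pos_of_pos (by positivity) _
    · exact Real.rpow_pos_of_pos (by norm_num) _
  have hβ : 0 < 2 * α + 1 := by linarith
  set f : ℝ → ℝ≥0∞ := fun t => ENNReal.ofReal (t ^ (2 * α + 1) / K) with hfdef
  have hf : Measurable f := by fun_prop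
  set μden := (volume : Measure ℝ).withDensity f with hμden
  set n := d - 1 with hn
  set V : ℝ≥0∞ := volume (Metric.ball (0 : E) 1) with hV
  refine ⟨2 ^ (3*(2*α+1)+3) * 2 ^ n, by positivity, ?_⟩
  intro ε hε x hx2 hεx
  have hCeq : Cplus x ε = (Metric.closedBall x.1 ε) ×ˢ (Ioo (max 0 (x.2 - ε)) (x.2 + ε)) := by
    ext p
    simp [Cplus, Set.mem_prod, Metric.mem_closedBall, dist_eq_norm]
  have hbox : ∀ (z : E) (r : ℝ) (I : Set ℝ), MeasurableSet I → I ⊆ Ioi 0 →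
      nu α d ((Metric.closedBall z r) ×ˢ I) = volume (Metric.closedBall z r) * μden I := by
    intro z r I hI hIpos
    have hms : MeasurableSet ((Metric.closedBall z r) ×ˢ I) :=
      (measurableSet_closedBall).prod hI
    have hsub : (Metric.closedBall z r) ×ˢ I ⊆ {p : Pt d | 0 < p.2} := by
      rintro p ⟨-, hp2⟩; exact hIpos hp2
    rw [nu, Measure.restrict_apply hms, inter_eq_left.mpr hsub, Measure.prod_prod]
  have hCsub : Ioo (max 0 (x.2 - ε)) (x.2 + ε) ⊆ Ioi (0:ℝ) := fun t ht =>
    lt_of_le_of_lt (le_max_left _ _) ht.1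
  have hIC : μden (Ioo (max 0 (x.2 - ε)) (x.2 + ε)) ≤
      ENNReal.ofReal ((x.2 + ε) ^ (2*α+1) / K) * ENNReal.ofReal (2 * ε) := by
    rw [hμden, withDensity_apply _ measurableSet_Ioo]
    calc ∫⁻ t in Ioo (max 0 (x.2 - ε)) (x.2 + ε), f t
        ≤ ∫⁻ _ in Ioo (max 0 (x.2 - ε)) (x.2 + ε),
            ENNReal.ofReal ((x.2 + ε) ^ (2*α+1) / K) := by
          apply setLIntegral_mono' measurableSet_Ioo
          intro t ht
          apply ENNReal.ofReal_le_ofReal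
          apply (div_le_div_iff_of_pos_right hK).mpr
          exact Real.rpow_le_rpow ((le_max_left 0 _).trans ht.1.le) ht.2.le hβ.le
      _ = ENNReal.ofReal ((x.2 + ε) ^ (2*α+1) / K) *
          volume (Ioo (max 0 (x.2 - ε)) (x.2 + ε)) := setLIntegral_const _ _
      _ = ENNReal.ofReal ((x.2 + ε) ^ (2*α+1) / K) * ENNReal.ofReal (2 * ε) := by
          rw [Real.volume_Ioo, max_eq_right (by linarith : (0:ℝ) ≤ x.2 - ε)]
          congr 1
          ring
  have hIB : ENNReal.ofReal ((ε/4) ^ (2*α+1) / K) * ENNReal.ofReal (ε/4) ≤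
      μden (Ioo 0 (ε/2)) := by
    rw [hμden, withDensity_apply _ measurableSet_Ioo]
    calc ENNReal.ofReal ((ε/4) ^ (2*α+1) / K) * ENNReal.ofReal (ε/4)
        = ENNReal.ofReal ((ε/4) ^ (2*α+1) / K) * volume (Ioo (ε/4) (ε/2)) := by
          rw [Real.volume_Ioo]; congr 1; ring
      _ = ∫⁻ _ in Ioo (ε/4) (ε/2), ENNReal.ofReal ((ε/4) ^ (2*α+1) / K) :=
          (setLIntegral_const _ _).symm
      _ ≤ ∫⁻ t in Ioo (ε/4) (ε/2), f t := by
          apply setLIntegral_mono' measurableSet_Ioo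
          intro t ht
          apply ENNReal.ofReal_le_ofReal
          apply (div_le_div_iff_of_pos_right hK).mpr
          exact Real.rpow_le_rpow (by positivity) ht.1.le hβ.le
      _ ≤ ∫⁻ t in Ioo 0 (ε/2), f t :=
          lintegral_mono_set (Ioo_subset_Ioo (by positivity) le_rfl)
  have hBsub : (Metric.closedBall (0:E) (ε/2)) ×ˢ (Ioo 0 (ε/2)) ⊆ Bplus (0 : Pt d) ε := by
    rintro p ⟨hp1, hp2⟩
    have h1 : ‖p.1‖ ≤ ε/2 := by simpa [dist_zero_right] using hp1
    refine ⟨?_, (hp2.1).le⟩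
    show Real.sqrt (‖(p - 0).1‖ ^ 2 + (p - 0).2 ^ 2) ≤ ε
    rw [sub_zero]
    have hsum : ‖p.1‖ ^ 2 + p.2 ^ 2 ≤ ε ^ 2 := by
      have h2 : p.2 ≤ ε / 2 := hp2.2.le
      have h2' : 0 < p.2 := hp2.1
      nlinarith [norm_nonneg p.1]
    calc Real.sqrt (‖p.1‖ ^ 2 + p.2 ^ 2) ≤ Real.sqrt (ε ^ 2) := Real.sqrt_le_sqrt hsum
      _ = ε := Real.sqrt_sq hε.le
  have hballC : volume (Metric.closedBall x.1 ε) = ENNReal.ofReal (ε ^ n) * V := by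
    rw [Measure.addHaar_closedBall_center, Measure.addHaar_closedBall _ _ hε.le,
      finrank_euclideanSpace_fin]
  have hballB : volume (Metric.closedBall (0:E) (ε/2)) = ENNReal.ofReal ((ε/2) ^ n) * V := by
    rw [Measure.addHaar_closedBall _ _ (by positivity : (0:ℝ) ≤ ε/2),
      finrank_euclideanSpace_fin]
  have hC : nu α d (Cplus x ε) ≤
      (ENNReal.ofReal (ε ^ n) * V) *
        (ENNReal.ofReal ((x.2 + ε) ^ (2*α+1) / K) * ENNReal.ofReal (2 * ε)) := by
    rw [hCeq, hbox _ _ _ measurableSet_Ioo hCsub, hballC]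
    exact mul_le_mul_right hIC _
  have hB : (ENNReal.ofReal ((ε/2) ^ n) * V) *
      (ENNReal.ofReal ((ε/4) ^ (2*α+1) / K) * ENNReal.ofReal (ε/4)) ≤
      nu α d (Bplus (0 : Pt d) ε) := by
    refine le_trans ?_ (measure_mono hBsub)
    rw [hbox _ _ _ measurableSet_Ioo (fun t ht => ht.1), hballB]
    exact mul_le_mul_right hIB _
  -- combine ofReal factors
  have comb : ∀ p q : ℝ, 0 ≤ p →
      ENNReal.ofReal p * ENNReal.ofReal q = ENNReal.ofReal (p * q) := fun p q hp =>
    (ENNReal.ofReal_mul hp).symm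
  have e1 : (ENNReal.ofReal (ε ^ n) * V) *
      (ENNReal.ofReal ((x.2 + ε) ^ (2*α+1) / K) * ENNReal.ofReal (2 * ε)) =
      ENNReal.ofReal (ε ^ n * ((x.2 + ε) ^ (2*α+1) / K * (2 * ε))) * V := by
    rw [← comb (ε ^ n) ((x.2 + ε) ^ (2*α+1) / K * (2 * ε)) (by positivity),
      ← comb ((x.2 + ε) ^ (2*α+1) / K) (2 * ε) (by positivity)]
    ring
  have e2 : ENNReal.ofReal ((2 ^ (3*(2*α+1)+3) * 2 ^ n * (x.2 / ε) ^ (2*α+1)) *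
        ((ε/2) ^ n * ((ε/4) ^ (2*α+1) / K * (ε/4)))) * V =
      ENNReal.ofReal (2 ^ (3*(2*α+1)+3) * 2 ^ n * (x.2 / ε) ^ (2 * α + 1)) *
        ((ENNReal.ofReal ((ε/2) ^ n) * V) *
          (ENNReal.ofReal ((ε/4) ^ (2*α+1) / K) * ENNReal.ofReal (ε/4))) := by
    rw [← comb (2 ^ (3*(2*α+1)+3) * 2 ^ n * (x.2 / ε) ^ (2 * α + 1))
        ((ε/2) ^ n * ((ε/4) ^ (2*α+1) / K * (ε/4))) (by positivity),
      ← comb ((ε/2) ^ n) ((ε/4) ^ (2*α+1) / K * (ε/4)) (by positivity),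
      ← comb ((ε/4) ^ (2*α+1) / K) (ε/4) (by positivity)]
    ring
  calc nu α d (Cplus x ε)
      ≤ (ENNReal.ofReal (ε ^ n) * V) *
        (ENNReal.ofReal ((x.2 + ε) ^ (2*α+1) / K) * ENNReal.ofReal (2 * ε)) := hC
    _ = ENNReal.ofReal (ε ^ n * ((x.2 + ε) ^ (2*α+1) / K * (2 * ε))) * V := e1
    _ ≤ ENNReal.ofReal ((2 ^ (3*(2*α+1)+3) * 2 ^ n * (x.2 / ε) ^ (2*α+1)) *
          ((ε/2) ^ n * ((ε/4) ^ (2*α+1) / K * (ε/4)))) * V :=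
        mul_le_mul_left (ENNReal.ofReal_le_ofReal
          (key_real α K hα hK n ε x.2 hε hεx)) V
    _ = ENNReal.ofReal (2 ^ (3*(2*α+1)+3) * 2 ^ n * (x.2 / ε) ^ (2 * α + 1)) *
        ((ENNReal.ofReal ((ε/2) ^ n) * V) *
          (ENNReal.ofReal ((ε/4) ^ (2*α+1) / K) * ENNReal.ofReal (ε/4))) := e2
    _ ≤ ENNReal.ofReal (2 ^ (3*(2*α+1)+3) * 2 ^ n * (x.2 / ε) ^ (2 * α + 1)) *
        nu α d (Bplus (0 : Pt d) ε) := mul_le_mul_right hB _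


end
end
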